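/- Let T > 0, β > 1, and let g : [0,T] → [0,∞) be measurable and Lebesgue integrable. Let h : [0,T] → [0,∞) be continuous, and differentiable at every point where h > 0, with |h′(t)| ≤ g(t) · h(t)^β at every t where h(t) > 0 (with the derivative inequality holding almost everywhere on the open set {h > 0}). If h(T*) > 0 for some T* ∈ [0,T], then h(t) > 0 for all t ∈ [0,T]. -/

import Mathlib

open MeasureTheory Set Topology Filter


lemma starov_aux_left (a b β : ℝ) (hab : a < b) (hβ : 1 < β) (g h h' : ℝ → ℝ)
    (hg0 : ∀ t, 0 ≤ g t) (hgint : IntegrableOn g (Set.Icc a b))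
    (hcont : ContinuousOn h (Set.Icc a b))
    (ha0 : h a = 0)
    (hpos : ∀ t ∈ Set.Ioc a b, 0 < h t)
    (hdiff : ∀ t ∈ Set.Ioo a b, HasDerivAt h (h' t) t)
    (hode : ∀ᵐ t : ℝ, t ∈ Set.Ioo a b → |h' t| ≤ g t * h t ^ β) : False := by
  set u : ℝ → ℝ := fun x => h x ^ (1 - β) with hu
  set v : ℝ → ℝ := deriv u with hv
  have hβ0 : (1:ℝ) - β < 0 := by linarith
  have hudiff : ∀ x ∈ Set.Ioo a b, HasDerivAt u (v x) x := by
    intro x hx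
    have hx0 : 0 < h x := hpos x ⟨hx.1, hx.2.le⟩
    have hd := (hdiff x hx).rpow_const (p := 1 - β) (Or.inl hx0.ne')
    have hvx : v x = h' x * (1 - β) * h x ^ (1 - β - 1) := hd.deriv
    rw [hvx]; exact hd
  have hvbound : ∀ᵐ x : ℝ, x ∈ Set.Ioo a b → |v x| ≤ (β - 1) * g x := by
    filter_upwards [hode] with x hx hmem
    have hx0 : 0 < h x := hpos x ⟨hmem.1, hmem.2.le⟩
    have hvx : v x = h' x * (1 - β) * h x ^ (1 - β - 1) :=
      ((hdiff x hmem).rpow_const (p := 1 - β) (Or.inl hx0.ne')).deriv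
    have key : h x ^ β * h x ^ (1 - β - 1) = 1 := by
      rw [← Real.rpow_add hx0, show β + (1 - β - 1) = 0 by ring, Real.rpow_zero]
    have h1 : |(1:ℝ) - β| = β - 1 := by rw [abs_of_nonpos (by linarith)]; ring
    have h2 : |h x ^ (1 - β - 1)| = h x ^ (1 - β - 1) :=
      abs_of_nonneg (Real.rpow_nonneg hx0.le _)
    rw [hvx, abs_mul, abs_mul, h1, h2]
    calc |h' x| * (β - 1) * h x ^ (1 - β - 1)
        ≤ g x * h x ^ β * (β - 1) * h x ^ (1 - β - 1) := by
          apply mul_le_mul_of_nonneg_right _ (Real.rpow_nonneg hx0.le _)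
          exact mul_le_mul_of_nonneg_right (hx hmem) (by linarith)
      _ = (β - 1) * g x * (h x ^ β * h x ^ (1 - β - 1)) := by ring
      _ = (β - 1) * g x := by rw [key, mul_one]
  set C : ℝ := (β - 1) * ∫ x in Set.Icc a b, g x with hC
  have hC0 : 0 ≤ C :=
    mul_nonneg (by linarith) (setIntegral_nonneg measurableSet_Icc fun x _ => hg0 x)
  have hgint1 : IntegrableOn (fun x => (β - 1) * g x) (Set.Icc a b) := hgint.const_mul _
  have claim : ∀ t ∈ Set.Ioo a b, u t ≤ u b + C := by
    intro t ht
    have htb : t < b := ht.2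
    have hsub : Set.Ioo t b ⊆ Set.Ioo a b := Set.Ioo_subset_Ioo ht.1.le le_rfl
    have hsub2 : Set.Ioc t b ⊆ Set.Icc a b := fun x hx => ⟨(ht.1.trans hx.1).le, hx.2⟩
    have hvmeas : Measurable v := measurable_deriv u
    have hneb : ∀ᵐ x : ℝ, x ≠ b := by
      rw [ae_iff]
      simp only [not_not, Set.setOf_eq_eq_singleton]
      exact measure_singleton b
    have hgint' : IntegrableOn (fun x => (β - 1) * g x) (Set.Ioc t b) :=
      hgint1.mono_set hsub2
    have hvint : IntegrableOn v (Set.Ioc t b) := by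
      apply Integrable.mono' hgint' hvmeas.aestronglyMeasurable
      filter_upwards [ae_restrict_mem measurableSet_Ioc, ae_restrict_of_ae hvbound,
        ae_restrict_of_ae hneb] with x h1 h2 h3
      have hxm : x ∈ Set.Ioo a b := ⟨ht.1.trans h1.1, lt_of_le_of_ne h1.2 h3⟩
      simpa [Real.norm_eq_abs] using h2 hxm
    have hvint' : IntervalIntegrable v volume t b :=
      intervalIntegrable_iff.mpr (by rwa [Set.uIoc_of_le htb.le])
    have hgII : IntervalIntegrable (fun x => (β - 1) * g x) volume t b :=
      intervalIntegrable_iff.mpr (by rw [Set.uIoc_of_le htb.le]; exact hgint')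
    have hcont' : ContinuousOn u (Set.uIcc t b) := by
      rw [Set.uIcc_of_le htb.le]
      apply ContinuousOn.rpow_const (hcont.mono (Set.Icc_subset_Icc ht.1.le le_rfl))
      intro x hx
      exact Or.inl (hpos x ⟨ht.1.trans_le hx.1, hx.2⟩).ne'
    have hftc : ∫ y in t..b, v y = u b - u t := by
      apply intervalIntegral.integral_eq_sub_of_hasDeriv_right hcont' _ hvint'
      intro x hx
      rw [min_eq_left htb.le, max_eq_right htb.le] at hx
      exact (hudiff x (hsub hx)).hasDerivWithinAt
    have hbnd : |u b - u t| ≤ |∫ y in t..b, (β - 1) * g y| := by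
      rw [← hftc, ← Real.norm_eq_abs (∫ y in t..b, v y)]
      apply intervalIntegral.norm_integral_le_abs_of_norm_le _ hgII
      rw [Set.uIoc_of_le htb.le]
      filter_upwards [ae_restrict_mem measurableSet_Ioc, ae_restrict_of_ae hvbound,
        ae_restrict_of_ae hneb] with x h1 h2 h3
      have hxm : x ∈ Set.Ioo a b := ⟨ht.1.trans h1.1, lt_of_le_of_ne h1.2 h3⟩
      simpa [Real.norm_eq_abs] using h2 hxm
    have hbnd2 : |∫ y in t..b, (β - 1) * g y| ≤ C := by
      rw [abs_of_nonneg (intervalIntegral.integral_nonneg htb.le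
        fun x _ => mul_nonneg (by linarith) (hg0 x))]
      rw [intervalIntegral.integral_of_le htb.le]
      calc ∫ y in Set.Ioc t b, (β - 1) * g y
          ≤ ∫ y in Set.Icc a b, (β - 1) * g y := by
            apply setIntegral_mono_set hgint1
            · filter_upwards with x using mul_nonneg (by linarith) (hg0 x)
            · exact hsub2.eventuallyLE
        _ = C := by rw [hC, ← integral_const_mul]
    have := abs_le.mp (hbnd.trans hbnd2)
    linarith [this.1]
  -- now derive the contradiction
  set M : ℝ := u b + C with hM
  set M' : ℝ := max M 1 with hM'
  have hM'0 : (0:ℝ) < M' := lt_of_lt_of_le one_pos (le_max_right _ _)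
  set ε : ℝ := M' ^ (1 - β)⁻¹ with hε
  have hε0 : 0 < ε := Real.rpow_pos_of_pos hM'0 _
  have hεpow : ε ^ (1 - β) = M' := by
    rw [hε, ← Real.rpow_mul hM'0.le, inv_mul_cancel₀ hβ0.ne, Real.rpow_one]
  have hne : (𝓝[Set.Ioo a b] a).NeBot := by
    apply mem_closure_iff_nhdsWithin_neBot.mp
    rw [closure_Ioo hab.ne]
    exact ⟨le_rfl, hab.le⟩
  have htend : Filter.Tendsto h (𝓝[Set.Ioo a b] a) (𝓝 0) := by
    rw [← ha0]
    exact ((hcont a ⟨le_rfl, hab.le⟩).mono Set.Ioo_subset_Icc_self).tendsto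
  obtain ⟨x, hxε, hxm⟩ := ((htend.eventually_lt_const hε0).and eventually_mem_nhdsWithin).exists
  have hx0 : 0 < h x := hpos x ⟨hxm.1, hxm.2.le⟩
  have hlt : ε ^ (1 - β) < h x ^ (1 - β) := Real.rpow_lt_rpow_of_neg hx0 hxε hβ0
  rw [hεpow] at hlt
  have h1 : u x ≤ M := claim x hxm
  have h2 : M ≤ M' := le_max_left _ _
  exact absurd h1 (not_le.mpr (lt_of_le_of_lt h2 hlt))

lemma starov_aux_right (a b β : ℝ) (hab : a < b) (hβ : 1 < β) (g h h' : ℝ → ℝ)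
    (hg0 : ∀ t, 0 ≤ g t) (hgint : IntegrableOn g (Set.Icc a b))
    (hcont : ContinuousOn h (Set.Icc a b))
    (hb0 : h b = 0)
    (hpos : ∀ t ∈ Set.Ico a b, 0 < h t)
    (hdiff : ∀ t ∈ Set.Ioo a b, HasDerivAt h (h' t) t)
    (hode : ∀ᵐ t : ℝ, t ∈ Set.Ioo a b → |h' t| ≤ g t * h t ^ β) : False := by
  set u : ℝ → ℝ := fun x => h x ^ (1 - β) with hu
  set v : ℝ → ℝ := deriv u with hv
  have hβ0 : (1:ℝ) - β < 0 := by linarith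
  have hudiff : ∀ x ∈ Set.Ioo a b, HasDerivAt u (v x) x := by
    intro x hx
    have hx0 : 0 < h x := hpos x ⟨hx.1.le, hx.2⟩
    have hd := (hdiff x hx).rpow_const (p := 1 - β) (Or.inl hx0.ne')
    have hvx : v x = h' x * (1 - β) * h x ^ (1 - β - 1) := hd.deriv
    rw [hvx]; exact hd
  have hvbound : ∀ᵐ x : ℝ, x ∈ Set.Ioo a b → |v x| ≤ (β - 1) * g x := by
    filter_upwards [hode] with x hx hmem
    have hx0 : 0 < h x := hpos x ⟨hmem.1.le, hmem.2⟩
    have hvx : v x = h' x * (1 - β) * h x ^ (1 - β - 1) :=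
      ((hdiff x hmem).rpow_const (p := 1 - β) (Or.inl hx0.ne')).deriv
    have key : h x ^ β * h x ^ (1 - β - 1) = 1 := by
      rw [← Real.rpow_add hx0, show β + (1 - β - 1) = 0 by ring, Real.rpow_zero]
    have h1 : |(1:ℝ) - β| = β - 1 := by rw [abs_of_nonpos (by linarith)]; ring
    have h2 : |h x ^ (1 - β - 1)| = h x ^ (1 - β - 1) :=
      abs_of_nonneg (Real.rpow_nonneg hx0.le _)
    rw [hvx, abs_mul, abs_mul, h1, h2]
    calc |h' x| * (β - 1) * h x ^ (1 - β - 1)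
        ≤ g x * h x ^ β * (β - 1) * h x ^ (1 - β - 1) := by
          apply mul_le_mul_of_nonneg_right _ (Real.rpow_nonneg hx0.le _)
          exact mul_le_mul_of_nonneg_right (hx hmem) (by linarith)
      _ = (β - 1) * g x * (h x ^ β * h x ^ (1 - β - 1)) := by ring
      _ = (β - 1) * g x := by rw [key, mul_one]
  set C : ℝ := (β - 1) * ∫ x in Set.Icc a b, g x with hC
  have hC0 : 0 ≤ C :=
    mul_nonneg (by linarith) (setIntegral_nonneg measurableSet_Icc fun x _ => hg0 x)
  have hgint1 : IntegrableOn (fun x => (β - 1) * g x) (Set.Icc a b) := hgint.const_mul _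
  have claim : ∀ t ∈ Set.Ioo a b, u t ≤ u a + C := by
    intro t ht
    have hat : a < t := ht.1
    have hsub : Set.Ioo a t ⊆ Set.Ioo a b := Set.Ioo_subset_Ioo le_rfl ht.2.le
    have hsub2 : Set.Ioc a t ⊆ Set.Ioo a b := fun x hx => ⟨hx.1, hx.2.trans_lt ht.2⟩
    have hsub3 : Set.Ioc a t ⊆ Set.Icc a b := fun x hx => ⟨hx.1.le, (hx.2.trans_lt ht.2).le⟩
    have hvmeas : Measurable v := measurable_deriv u
    have hgint' : IntegrableOn (fun x => (β - 1) * g x) (Set.Ioc a t) :=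
      hgint1.mono_set hsub3
    have hvint : IntegrableOn v (Set.Ioc a t) := by
      apply Integrable.mono' hgint' hvmeas.aestronglyMeasurable
      filter_upwards [ae_restrict_mem measurableSet_Ioc, ae_restrict_of_ae hvbound]
        with x h1 h2
      simpa [Real.norm_eq_abs] using h2 (hsub2 h1)
    have hvint' : IntervalIntegrable v volume a t :=
      intervalIntegrable_iff.mpr (by rwa [Set.uIoc_of_le hat.le])
    have hgII : IntervalIntegrable (fun x => (β - 1) * g x) volume a t :=
      intervalIntegrable_iff.mpr (by rw [Set.uIoc_of_le hat.le]; exact hgint')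
    have hcont' : ContinuousOn u (Set.uIcc a t) := by
      rw [Set.uIcc_of_le hat.le]
      apply ContinuousOn.rpow_const (hcont.mono (Set.Icc_subset_Icc le_rfl ht.2.le))
      intro x hx
      exact Or.inl (hpos x ⟨hx.1, hx.2.trans_lt ht.2⟩).ne'
    have hftc : ∫ y in a..t, v y = u t - u a := by
      apply intervalIntegral.integral_eq_sub_of_hasDeriv_right hcont' _ hvint'
      intro x hx
      rw [min_eq_left hat.le, max_eq_right hat.le] at hx
      exact (hudiff x (hsub hx)).hasDerivWithinAt
    have hbnd : |u t - u a| ≤ |∫ y in a..t, (β - 1) * g y| := by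
      rw [← hftc, ← Real.norm_eq_abs (∫ y in a..t, v y)]
      apply intervalIntegral.norm_integral_le_abs_of_norm_le _ hgII
      rw [Set.uIoc_of_le hat.le]
      filter_upwards [ae_restrict_mem measurableSet_Ioc, ae_restrict_of_ae hvbound]
        with x h1 h2
      simpa [Real.norm_eq_abs] using h2 (hsub2 h1)
    have hbnd2 : |∫ y in a..t, (β - 1) * g y| ≤ C := by
      rw [abs_of_nonneg (intervalIntegral.integral_nonneg hat.le
        fun x _ => mul_nonneg (by linarith) (hg0 x))]
      rw [intervalIntegral.integral_of_le hat.le]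
      calc ∫ y in Set.Ioc a t, (β - 1) * g y
          ≤ ∫ y in Set.Icc a b, (β - 1) * g y := by
            apply setIntegral_mono_set hgint1
            · filter_upwards with x using mul_nonneg (by linarith) (hg0 x)
            · exact hsub3.eventuallyLE
        _ = C := by rw [hC, ← integral_const_mul]
    have := abs_le.mp (hbnd.trans hbnd2)
    linarith [this.1]
  set M : ℝ := u a + C with hM
  set M' : ℝ := max M 1 with hM'
  have hM'0 : (0:ℝ) < M' := lt_of_lt_of_le one_pos (le_max_right _ _)
  set ε : ℝ := M' ^ (1 - β)⁻¹ with hε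
  have hε0 : 0 < ε := Real.rpow_pos_of_pos hM'0 _
  have hεpow : ε ^ (1 - β) = M' := by
    rw [hε, ← Real.rpow_mul hM'0.le, inv_mul_cancel₀ hβ0.ne, Real.rpow_one]
  have hne : (𝓝[Set.Ioo a b] b).NeBot := by
    apply mem_closure_iff_nhdsWithin_neBot.mp
    rw [closure_Ioo hab.ne]
    exact ⟨hab.le, le_rfl⟩
  have htend : Filter.Tendsto h (𝓝[Set.Ioo a b] b) (𝓝 0) := by
    rw [← hb0]
    exact ((hcont b ⟨hab.le, le_rfl⟩).mono Set.Ioo_subset_Icc_self).tendsto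
  obtain ⟨x, hxε, hxm⟩ := ((htend.eventually_lt_const hε0).and eventually_mem_nhdsWithin).exists
  have hx0 : 0 < h x := hpos x ⟨hxm.1.le, hxm.2⟩
  have hlt : ε ^ (1 - β) < h x ^ (1 - β) := Real.rpow_lt_rpow_of_neg hx0 hxε hβ0
  rw [hεpow] at hlt
  have h1 : u x ≤ M := claim x hxm
  have h2 : M ≤ M' := le_max_left _ _
  exact absurd h1 (not_le.mpr (lt_of_le_of_lt h2 hlt))


/-- Starovoitov no-collision, case β > 1: Let `T > 0`, `β > 1`,
`g : [0,T] → [0,∞)` measurable and integrable, and `h : [0,T] → [0,∞)` continuous,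
differentiable (within `[0,T]`) at every point where `h > 0`, with
`|h′(t)| ≤ g(t)·h(t)^β` holding almost everywhere on `{h > 0}`. If `h(T*) > 0` for
some `T* ∈ [0,T]`, then `h(t) > 0` for all `t ∈ [0,T]`. -/
theorem stmt_5 (T β : ℝ) (hT : 0 < T) (hβ : 1 < β)
    (g : ℝ → ℝ) (hgmeas : Measurable g) (hg0 : ∀ t, 0 ≤ g t)
    (hgint : IntegrableOn g (Set.Icc 0 T))
    (h h' : ℝ → ℝ) (hh0 : ∀ t ∈ Set.Icc (0:ℝ) T, 0 ≤ h t)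
    (hcont : ContinuousOn h (Set.Icc 0 T))
    (hdiff : ∀ t ∈ Set.Icc (0:ℝ) T, 0 < h t → HasDerivWithinAt h (h' t) (Set.Icc 0 T) t)
    (hode : ∀ᵐ t : ℝ, t ∈ Set.Icc (0:ℝ) T → 0 < h t → |h' t| ≤ g t * h t ^ β)
    (Tstar : ℝ) (hTstar : Tstar ∈ Set.Icc (0:ℝ) T) (hpos : 0 < h Tstar) :
    ∀ t ∈ Set.Icc (0:ℝ) T, 0 < h t := by
  intro t ht
  by_contra hcon
  have ht0 : h t = 0 := le_antisymm (not_lt.mp hcon) (hh0 t ht)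
  have htne : t ≠ Tstar := by
    intro he; rw [he] at ht0; linarith
  rcases lt_or_gt_of_ne htne with hlt | hgt
  · -- t < Tstar : last zero before Tstar
    set S : Set ℝ := Set.Icc t Tstar ∩ h ⁻¹' {0} with hS
    have hSsub : S ⊆ Set.Icc t Tstar := Set.inter_subset_left
    have hIccsub : Set.Icc t Tstar ⊆ Set.Icc 0 T := Set.Icc_subset_Icc ht.1 hTstar.2
    have hSne : S.Nonempty := ⟨t, ⟨le_rfl, hlt.le⟩, ht0⟩
    have hScl : IsClosed S :=
      (hcont.mono hIccsub).preimage_isClosed_of_isClosed isClosed_Icc isClosed_singleton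
    have hScompact : IsCompact S := isCompact_Icc.of_isClosed_subset hScl hSsub
    set a : ℝ := sSup S with haS
    have haMem : a ∈ S := hScompact.sSup_mem hSne
    have ha0 : h a = 0 := haMem.2
    have haI : a ∈ Set.Icc t Tstar := hSsub haMem
    have haT : a < Tstar := lt_of_le_of_ne haI.2 (by intro he; rw [he] at ha0; linarith)
    have haIcc : a ∈ Set.Icc (0:ℝ) T := hIccsub haI
    have hposIoc : ∀ s ∈ Set.Ioc a Tstar, 0 < h s := by
      intro s hs
      have hsI : s ∈ Set.Icc (0:ℝ) T :=
        ⟨haIcc.1.trans hs.1.le, hs.2.trans hTstar.2⟩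
      rcases lt_or_eq_of_le (hh0 s hsI) with hp | hp
      · exact hp
      · exfalso
        have hsS : s ∈ S := ⟨⟨haI.1.trans hs.1.le, hs.2⟩, hp.symm⟩
        exact absurd (le_csSup hScompact.bddAbove hsS) (not_le.mpr hs.1)
    refine starov_aux_left a Tstar β haT hβ g h h' hg0
      (hgint.mono_set (Set.Icc_subset_Icc haIcc.1 hTstar.2))
      (hcont.mono (Set.Icc_subset_Icc haIcc.1 hTstar.2)) ha0 hposIoc ?_ ?_
    · intro x hx
      have hxI : x ∈ Set.Icc (0:ℝ) T :=
        ⟨haIcc.1.trans hx.1.le, (hx.2.trans_le hTstar.2).le⟩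
      have hx0 : 0 < h x := hposIoc x ⟨hx.1, hx.2.le⟩
      exact (hdiff x hxI hx0).hasDerivAt
        (Icc_mem_nhds (haIcc.1.trans_lt hx.1) (hx.2.trans_le hTstar.2))
    · filter_upwards [hode] with x hx hmem
      have hxI : x ∈ Set.Icc (0:ℝ) T :=
        ⟨haIcc.1.trans hmem.1.le, (hmem.2.trans_le hTstar.2).le⟩
      exact hx hxI (hposIoc x ⟨hmem.1, hmem.2.le⟩)
  · -- Tstar < t : first zero after Tstar
    set S : Set ℝ := Set.Icc Tstar t ∩ h ⁻¹' {0} with hS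
    have hSsub : S ⊆ Set.Icc Tstar t := Set.inter_subset_left
    have hIccsub : Set.Icc Tstar t ⊆ Set.Icc 0 T := Set.Icc_subset_Icc hTstar.1 ht.2
    have hSne : S.Nonempty := ⟨t, ⟨hgt.le, le_rfl⟩, ht0⟩
    have hScl : IsClosed S :=
      (hcont.mono hIccsub).preimage_isClosed_of_isClosed isClosed_Icc isClosed_singleton
    have hScompact : IsCompact S := isCompact_Icc.of_isClosed_subset hScl hSsub
    set b : ℝ := sInf S with hbS
    have hbMem : b ∈ S := hScompact.sInf_mem hSne
    have hb0 : h b = 0 := hbMem.2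
    have hbI : b ∈ Set.Icc Tstar t := hSsub hbMem
    have hbT : Tstar < b := lt_of_le_of_ne hbI.1 (by intro he; rw [← he] at hb0; linarith)
    have hbIcc : b ∈ Set.Icc (0:ℝ) T := hIccsub hbI
    have hposIco : ∀ s ∈ Set.Ico Tstar b, 0 < h s := by
      intro s hs
      have hsI : s ∈ Set.Icc (0:ℝ) T :=
        ⟨hTstar.1.trans hs.1, (hs.2.trans_le hbI.2).le.trans ht.2⟩
      rcases lt_or_eq_of_le (hh0 s hsI) with hp | hp
      · exact hp
      · exfalso
        have hsS : s ∈ S := ⟨⟨hs.1, (hs.2.trans_le hbI.2).le⟩, hp.symm⟩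
        exact absurd (csInf_le hScompact.bddBelow hsS) (not_le.mpr hs.2)
    refine starov_aux_right Tstar b β hbT hβ g h h' hg0
      (hgint.mono_set (Set.Icc_subset_Icc hTstar.1 hbIcc.2))
      (hcont.mono (Set.Icc_subset_Icc hTstar.1 hbIcc.2)) hb0 hposIco ?_ ?_
    · intro x hx
      have hxI : x ∈ Set.Icc (0:ℝ) T :=
        ⟨(hTstar.1.trans_lt hx.1).le, (hx.2.trans_le hbIcc.2).le⟩
      have hx0 : 0 < h x := hposIco x ⟨hx.1.le, hx.2⟩
      exact (hdiff x hxI hx0).hasDerivAt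
        (Icc_mem_nhds (hTstar.1.trans_lt hx.1) (hx.2.trans_le hbIcc.2))
    · filter_upwards [hode] with x hx hmem
      have hxI : x ∈ Set.Icc (0:ℝ) T :=
        ⟨(hTstar.1.trans_lt hmem.1).le, (hmem.2.trans_le hbIcc.2).le⟩
      exact hx hxI (hposIco x ⟨hmem.1.le, hmem.2⟩)
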